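/- Let S, A ≥ 1 be natural numbers, and let T ≥ S·A. Consider epochs e = 1, …, E with visitation counts ν_e : {1,…,S} × {1,…,A} → ℕ, and define N_e(s,a) = ∑_{i=1}^{e−1} ν_i(s,a). Assume: (i) ∑_{e=1}^{E} ∑_{s,a} ν_e(s,a) ≤ T; (ii) for every epoch e and every pair (s,a), ν_e(s,a) ≤ max{1, N_e(s,a)}; and (iii) for every epoch e ≤ E − 1 there is a pair (s,a) with ν_e(s,a) = max{1, N_e(s,a)}. Then E ≤ S·A·log₂(8T/(S·A)). -/

import Mathlib

open Finset

/-- Auxiliary doubling lemma: if an epoch `i` is a "trigger" exactly when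
`g i = max 1 (∑_{j<i} g j)`, then after `k` triggers the cumulative sum is at
least `2^(k-1)`. -/
lemma epoch_doubling_aux (g : ℕ → ℕ) (trig : ℕ → Prop) [DecidablePred trig]
    (htrig : ∀ i, trig i → g i = max 1 (∑ j ∈ Finset.Ico 1 i, g j)) (e : ℕ) :
    ((Finset.Ico 1 e).filter trig).card = 0 ∨
      2 ^ (((Finset.Ico 1 e).filter trig).card - 1) ≤ ∑ i ∈ Finset.Ico 1 e, g i := by
  induction e with
  | zero => left; simp
  | succ n ih =>
    rcases Nat.eq_zero_or_pos n with rfl | hn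
    · left; simp
    have hins : Finset.Ico 1 (n + 1) = insert n (Finset.Ico 1 n) :=
      Nat.Ico_succ_right_eq_insert_Ico hn
    have hnot : n ∉ Finset.Ico 1 n := by simp
    have hsum : ∑ i ∈ Finset.Ico 1 (n + 1), g i = g n + ∑ i ∈ Finset.Ico 1 n, g i := by
      rw [hins, Finset.sum_insert hnot]
    by_cases ht : trig n
    · right
      have hfilter : (Finset.Ico 1 (n + 1)).filter trig
          = insert n ((Finset.Ico 1 n).filter trig) := by
        rw [hins, Finset.filter_insert, if_pos ht]
      have hcard : ((Finset.Ico 1 (n + 1)).filter trig).card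
          = ((Finset.Ico 1 n).filter trig).card + 1 := by
        rw [hfilter, Finset.card_insert_of_notMem fun h => hnot (Finset.mem_filter.mp h).1]
      have hgn := htrig n ht
      rcases ih with h0 | hle
      · rw [hcard, h0, hsum, hgn]
        have : 1 ≤ max 1 (∑ j ∈ Finset.Ico 1 n, g j) := le_max_left _ _
        omega
      · rcases Nat.eq_zero_or_pos ((Finset.Ico 1 n).filter trig).card with h0 | hk
        · rw [hcard, h0, hsum, hgn]
          have : 1 ≤ max 1 (∑ j ∈ Finset.Ico 1 n, g j) := le_max_left _ _
          omega
        · have hfge : 1 ≤ ∑ j ∈ Finset.Ico 1 n, g j :=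
            le_trans (Nat.one_le_two_pow) hle
          have hmax : max 1 (∑ j ∈ Finset.Ico 1 n, g j) = ∑ j ∈ Finset.Ico 1 n, g j :=
            max_eq_right hfge
          rw [hcard, hsum, hgn, hmax]
          have h2 : 2 ^ (((Finset.Ico 1 n).filter trig).card + 1 - 1)
              = 2 * 2 ^ (((Finset.Ico 1 n).filter trig).card - 1) := by
            rw [Nat.add_sub_cancel, ← pow_succ']
            congr 1
            omega
          rw [h2]
          omega
    · have hfilter : (Finset.Ico 1 (n + 1)).filter trig = (Finset.Ico 1 n).filter trig := by
        rw [hins, Finset.filter_insert, if_neg ht]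
      rw [hfilter, hsum]
      rcases ih with h0 | hle
      · left; exact h0
      · right; omega

/-- Epoch-count bound for the doubling trick (Proposition 18 of Auer et al.):
with epochs `e = 1, …, E`, per-epoch visitation counts `ν e` and cumulative counts
`N e (s,a) = ∑_{i=1}^{e-1} ν i (s,a)`, if the total number of visits is at most `T`,
each epoch's count never exceeds `max 1 (N e (s,a))`, and every epoch `e ≤ E - 1`
ends because `ν e (s,a) = max 1 (N e (s,a))` for some `(s,a)`, then
`E ≤ S A log₂(8T/(S A))`. -/
theorem epoch_count_bound
    (S A T E : ℕ) (hS : 1 ≤ S) (hA : 1 ≤ A) (hT : S * A ≤ T)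
    (ν : ℕ → Fin S × Fin A → ℕ)
    (h1 : ∑ e ∈ Finset.Icc 1 E, ∑ sa : Fin S × Fin A, ν e sa ≤ T)
    (h2 : ∀ e ∈ Finset.Icc 1 E, ∀ sa : Fin S × Fin A,
      ν e sa ≤ max 1 (∑ i ∈ Finset.Ico 1 e, ν i sa))
    (h3 : ∀ e ∈ Finset.Icc 1 (E - 1), ∃ sa : Fin S × Fin A,
      ν e sa = max 1 (∑ i ∈ Finset.Ico 1 e, ν i sa)) :
    (E : ℝ) ≤ (S : ℝ) * (A : ℝ) * Real.logb 2 (8 * (T : ℝ) / ((S : ℝ) * (A : ℝ))) := by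
  classical
  set n : ℕ := S * A with hn_def
  have hn : Fintype.card (Fin S × Fin A) = n := by simp [hn_def]
  have hn1 : 1 ≤ n := Nat.one_le_iff_ne_zero.mpr (by positivity)
  have hT1 : 1 ≤ T := le_trans hn1 hT
  -- trigger predicate and counts
  let trig : Fin S × Fin A → ℕ → Prop :=
    fun sa i => ν i sa = max 1 (∑ j ∈ Finset.Ico 1 i, ν j sa)
  let K : Fin S × Fin A → ℕ := fun sa => ((Finset.Ico 1 E).filter (trig sa)).card
  -- Step 1 : E - 1 ≤ ∑ K
  have step1 : E - 1 ≤ ∑ sa : Fin S × Fin A, K sa := by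
    have hcard : (Finset.Ico 1 E).card = E - 1 := by simp
    have hle1 : ∀ e ∈ Finset.Ico 1 E,
        1 ≤ ∑ sa : Fin S × Fin A, (if trig sa e then 1 else 0) := by
      intro e he
      rw [Finset.mem_Ico] at he
      obtain ⟨sa, hsa⟩ := h3 e (by rw [Finset.mem_Icc]; omega)
      calc (1 : ℕ) = (if trig sa e then 1 else 0) := (if_pos (show trig sa e from hsa)).symm
        _ ≤ ∑ sa : Fin S × Fin A, (if trig sa e then 1 else 0) :=
            Finset.single_le_sum (f := fun sa => if trig sa e then 1 else 0)
              (fun _ _ => by positivity) (Finset.mem_univ sa)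
    calc E - 1 = ∑ _e ∈ Finset.Ico 1 E, 1 := by
          rw [Finset.sum_const, smul_eq_mul, mul_one, hcard]
      _ ≤ ∑ e ∈ Finset.Ico 1 E, ∑ sa : Fin S × Fin A, (if trig sa e then 1 else 0) :=
          Finset.sum_le_sum hle1
      _ = ∑ sa : Fin S × Fin A, ∑ e ∈ Finset.Ico 1 E, (if trig sa e then 1 else 0) :=
          Finset.sum_comm
      _ = ∑ sa : Fin S × Fin A, K sa := by
          refine Finset.sum_congr rfl fun sa _ => ?_
          exact (Finset.card_filter _ _).symm
  -- Step 2 : per-pair bound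
  have step2 : ∀ sa : Fin S × Fin A,
      2 ^ K sa ≤ 2 * (∑ i ∈ Finset.Ico 1 E, ν i sa) + 1 := by
    intro sa
    rcases epoch_doubling_aux (fun i => ν i sa) (trig sa) (fun i h => h) E with h0 | hle
    · show 2 ^ ((Finset.Ico 1 E).filter (trig sa)).card ≤ _
      rw [h0, pow_zero]
      omega
    · rcases Nat.eq_zero_or_pos (K sa) with h0 | hk
      · rw [h0, pow_zero]; omega
      · have h2 : 2 ^ K sa = 2 * 2 ^ (K sa - 1) := by
          rw [← pow_succ']
          congr 1
          omega
        rw [h2]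
        have : 2 ^ (K sa - 1) ≤ ∑ i ∈ Finset.Ico 1 E, ν i sa := hle
        omega
  -- Step 3 : total bound ∑ 2^K ≤ 3T
  have step3 : ∑ sa : Fin S × Fin A, 2 ^ K sa ≤ 3 * T := by
    have htot : ∑ sa : Fin S × Fin A, ∑ i ∈ Finset.Ico 1 E, ν i sa ≤ T := by
      calc ∑ sa : Fin S × Fin A, ∑ i ∈ Finset.Ico 1 E, ν i sa
          = ∑ i ∈ Finset.Ico 1 E, ∑ sa : Fin S × Fin A, ν i sa := Finset.sum_comm
        _ ≤ ∑ i ∈ Finset.Icc 1 E, ∑ sa : Fin S × Fin A, ν i sa :=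
            Finset.sum_le_sum_of_subset (by
              intro x hx
              rw [Finset.mem_Ico] at hx
              rw [Finset.mem_Icc]
              omega)
        _ ≤ T := h1
    calc ∑ sa : Fin S × Fin A, 2 ^ K sa
        ≤ ∑ sa : Fin S × Fin A, (2 * (∑ i ∈ Finset.Ico 1 E, ν i sa) + 1) :=
          Finset.sum_le_sum fun sa _ => step2 sa
      _ = 2 * (∑ sa : Fin S × Fin A, ∑ i ∈ Finset.Ico 1 E, ν i sa) + n := by
          rw [Finset.sum_add_distrib, Finset.mul_sum, Finset.sum_const, smul_eq_mul,
            mul_one, Finset.card_univ, hn]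
      _ ≤ 2 * T + T := by
          have := le_trans hn1 hT
          omega
      _ = 3 * T := by ring
  -- Step 4 : Jensen (AM-GM) in ℝ
  have hnR : (0 : ℝ) < (n : ℝ) := by exact_mod_cast hn1
  have step4 : (2 : ℝ) ^ (((∑ sa : Fin S × Fin A, K sa : ℕ) : ℝ) / n) ≤ 3 * T / n := by
    have hw : ∀ sa : Fin S × Fin A, sa ∈ Finset.univ → (0 : ℝ) ≤ (n : ℝ)⁻¹ :=
      fun _ _ => by positivity
    have hw' : ∑ _sa : Fin S × Fin A, (n : ℝ)⁻¹ = 1 := by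
      rw [Finset.sum_const, Finset.card_univ, hn, nsmul_eq_mul]
      field_simp
    have hz : ∀ sa : Fin S × Fin A, sa ∈ Finset.univ → (0 : ℝ) ≤ ((2 : ℝ) ^ K sa) :=
      fun sa _ => by positivity
    have hgm := Real.geom_mean_le_arith_mean_weighted Finset.univ
      (fun _ => (n : ℝ)⁻¹) (fun sa => (2 : ℝ) ^ K sa) hw hw' hz
    have hlhs : ∏ sa : Fin S × Fin A, ((2 : ℝ) ^ K sa) ^ ((n : ℝ)⁻¹)
        = (2 : ℝ) ^ (((∑ sa : Fin S × Fin A, K sa : ℕ) : ℝ) / n) := by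
      have hpt : ∀ sa : Fin S × Fin A, ((2 : ℝ) ^ K sa) ^ ((n : ℝ)⁻¹)
          = (2 : ℝ) ^ ((K sa : ℝ) * (n : ℝ)⁻¹) := by
        intro sa
        rw [← Real.rpow_natCast (2 : ℝ) (K sa), ← Real.rpow_mul (by norm_num)]
      rw [Finset.prod_congr rfl (fun sa _ => hpt sa),
        ← Real.rpow_sum_of_pos (by norm_num : (0:ℝ) < 2)]
      congr 1
      rw [← Finset.sum_mul, div_eq_mul_inv]
      norm_num
    have hrhs : ∑ sa : Fin S × Fin A, (n : ℝ)⁻¹ * ((2 : ℝ) ^ K sa) ≤ 3 * T / n := by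
      rw [← Finset.mul_sum]
      have hc : (∑ sa : Fin S × Fin A, ((2 : ℝ) ^ K sa)) ≤ 3 * T := by
        calc (∑ sa : Fin S × Fin A, ((2 : ℝ) ^ K sa))
            = ((∑ sa : Fin S × Fin A, 2 ^ K sa : ℕ) : ℝ) := by push_cast; ring
          _ ≤ ((3 * T : ℕ) : ℝ) := by exact_mod_cast step3
          _ = 3 * T := by push_cast; ring
      rw [inv_mul_le_iff₀ hnR]
      calc (∑ sa : Fin S × Fin A, ((2 : ℝ) ^ K sa)) ≤ 3 * T := hc
        _ = (n : ℝ) * (3 * T / n) := by field_simp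
    calc (2 : ℝ) ^ (((∑ sa : Fin S × Fin A, K sa : ℕ) : ℝ) / n)
        = ∏ sa : Fin S × Fin A, ((2 : ℝ) ^ K sa) ^ ((n : ℝ)⁻¹) := hlhs.symm
      _ ≤ ∑ sa : Fin S × Fin A, (n : ℝ)⁻¹ * ((2 : ℝ) ^ K sa) := hgm
      _ ≤ 3 * T / n := hrhs
  -- Step 5 : take log base 2
  have h3T : (0 : ℝ) < 3 * T / n := by
    have : (0:ℝ) < (T:ℝ) := by exact_mod_cast hT1
    positivity
  have step5 : ((∑ sa : Fin S × Fin A, K sa : ℕ) : ℝ) / n ≤ Real.logb 2 (3 * T / n) :=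
    (Real.le_logb_iff_rpow_le (by norm_num) h3T).mpr step4
  have step5' : ((∑ sa : Fin S × Fin A, K sa : ℕ) : ℝ) ≤ n * Real.logb 2 (3 * T / n) := by
    rw [div_le_iff₀ hnR] at step5
    linarith
  -- Step 6 : assemble
  have hEcast : (E : ℝ) ≤ ((E - 1 : ℕ) : ℝ) + 1 := by
    rcases Nat.eq_zero_or_pos E with rfl | hE
    · simp
    · rw [Nat.cast_sub hE]; simp
  have hstep1R : ((E - 1 : ℕ) : ℝ) ≤ ((∑ sa : Fin S × Fin A, K sa : ℕ) : ℝ) := by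
    exact_mod_cast step1
  have hfinal : (E : ℝ) ≤ n * Real.logb 2 (3 * T / n) + 1 := by linarith
  have hkey : (n : ℝ) * Real.logb 2 (3 * T / n) + 1
      ≤ (n : ℝ) * Real.logb 2 (8 * T / n) := by
    have hsplit : Real.logb 2 (8 * T / n) = Real.logb 2 (3 * T / n) + Real.logb 2 (8 / 3) := by
      rw [← Real.logb_mul (ne_of_gt h3T) (by norm_num)]
      congr 1
      field_simp
    have hlog83 : (1 : ℝ) ≤ Real.logb 2 (8 / 3) := by
      rw [show (1:ℝ) = Real.logb 2 2 by simp]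
      exact (Real.logb_le_logb (by norm_num) (by norm_num) (by norm_num)).mpr (by norm_num)
    have hnn : (1 : ℝ) ≤ (n : ℝ) := by exact_mod_cast hn1
    have hmul : (1 : ℝ) ≤ (n : ℝ) * Real.logb 2 (8 / 3) := by nlinarith
    rw [hsplit, mul_add]
    linarith
  have hfin2 : (E : ℝ) ≤ (n : ℝ) * Real.logb 2 (8 * T / n) := le_trans hfinal hkey
  have hcastn : ((n : ℕ) : ℝ) = (S : ℝ) * (A : ℝ) := by rw [hn_def]; push_cast; ring
  rw [hcastn] at hfin2
  exact hfin2
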